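/- arXiv:1506.06781 — 5 statements merged into one kernel-verified Lean document; each statement's English description precedes it below -/
import Mathlib

section
/- Relative Prokhorov closeness is characterized by approximate coupling: finite Borel measures μ_X and μ_Y on a compact metric space Z are relative (ε,δ)-close if and only if there exist measures μ̃_X ≤ μ_X, μ̃_Y ≤ μ_Y with e^{-δ}μ_X ≤ μ̃_X and e^{-δ}μ_Y ≤ μ̃_Y, and a coupling γ of μ̃_X and μ̃_Y supported in {(x,y) : d(x,y) ≤ ε}. -/
open MeasureTheory Metric Set ENNReal NNReal
set_option linter.unusedSectionVars false

section RPCAux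

variable {Z : Type*} [MetricSpace Z] [CompactSpace Z] [MeasurableSpace Z] [BorelSpace Z]

/-- Continuous functions on compact spaces are integrable against finite measures. -/
lemma RPC.integrable (μ : Measure Z) [IsFiniteMeasure μ] {f : Z → ℝ} (hf : Continuous f) :
    Integrable f μ :=
  hf.integrable_of_hasCompactSupport
    (IsCompact.of_isClosed_subset isCompact_univ (isClosed_tsupport f) (subset_univ _))

/-- If `μ ≤ ν` on open sets and `ν` is outer regular, then `μ ≤ ν`. -/
lemma RPC.measure_le_of_isOpen {α : Type*} [MeasurableSpace α] [TopologicalSpace α]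
    {μ ν : Measure α} [ν.OuterRegular] (h : ∀ U : Set α, IsOpen U → μ U ≤ ν U) : μ ≤ ν := by
  rw [Measure.le_iff]
  intro s hs
  rw [Set.measure_eq_iInf_isOpen s ν]
  refine le_iInf fun U => le_iInf fun hsU => le_iInf fun hU => ?_
  exact (measure_mono hsU).trans (h U hU)

/-- If `μ ≤ ν` on closed sets, `μ` is weakly regular and finite, then `μ ≤ ν`. -/
lemma RPC.measure_le_of_isClosed {α : Type*} [MeasurableSpace α] [TopologicalSpace α]
    [OpensMeasurableSpace α] {μ ν : Measure α} [μ.WeaklyRegular] (hfin : μ univ ≠ ⊤)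
    (h : ∀ F : Set α, IsClosed F → μ F ≤ ν F) : μ ≤ ν := by
  rw [Measure.le_iff]
  intro s hs
  by_contra hlt
  push_neg at hlt
  obtain ⟨F, hFs, hF, hlt'⟩ := hs.exists_lt_isClosed_of_ne_top
    (ne_top_of_le_ne_top hfin (measure_mono (subset_univ s))) hlt
  exact absurd ((h F hF).trans (measure_mono hFs)) (not_le.mpr hlt')

end RPCAux

section RPCQ

variable {Z : Type*} [MetricSpace Z] [CompactSpace Z] [MeasurableSpace Z] [BorelSpace Z]

/-- The "relative" linear-ish functional `f ↦ ∫ f₊ - k ∫ f₋` written as a single integral. -/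
noncomputable def RPC.Q (μ : Measure Z) (k : ℝ) (f : C(Z, ℝ)) : ℝ :=
  ∫ x, max (f x) (k * f x) ∂μ

namespace RPC

variable (μ : Measure Z) [IsFiniteMeasure μ] {k : ℝ}

lemma Q_zero : Q μ k 0 = 0 := by
  simp [Q]

lemma Q_eq_sub (hk0 : 0 ≤ k) (hk1 : k ≤ 1) (f : C(Z, ℝ)) :
    Q μ k f = ∫ x, max (f x) 0 ∂μ - k * ∫ x, max (-f x) 0 ∂μ := by
  have h1 : Integrable (fun x => max (f x) 0) μ :=
    RPC.integrable μ (f.continuous.max continuous_const)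
  have h2 : Integrable (fun x => k * max (-f x) 0) μ :=
    (RPC.integrable μ ((f.continuous.neg).max continuous_const)).const_mul k
  rw [Q, ← integral_const_mul, ← integral_sub h1 h2]
  refine integral_congr_ae (Filter.Eventually.of_forall fun x => ?_)
  simp only []
  rcases le_or_gt 0 (f x) with h | h
  · rw [max_eq_left (by nlinarith : k * f x ≤ f x), max_eq_left h,
      max_eq_right (by linarith : -f x ≤ 0)]
    ring
  · rw [max_eq_right (by nlinarith : f x ≤ k * f x), max_eq_right h.le,
      max_eq_left (by linarith : (0:ℝ) ≤ -f x)]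
    ring

lemma Q_mono (hk0 : 0 ≤ k) {f g : C(Z, ℝ)} (hfg : ∀ x, f x ≤ g x) : Q μ k f ≤ Q μ k g := by
  refine integral_mono (RPC.integrable μ (f.continuous.max (continuous_const.mul f.continuous)))
    (RPC.integrable μ (g.continuous.max (continuous_const.mul g.continuous))) fun x => ?_
  exact max_le_max (hfg x) (mul_le_mul_of_nonneg_left (hfg x) hk0)

lemma Q_add_le (hk0 : 0 ≤ k) (f g : C(Z, ℝ)) : Q μ k (f + g) ≤ Q μ k f + Q μ k g := by
  rw [Q, Q, Q, ← integral_add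
    (RPC.integrable μ (f := fun x => max (f x) (k * f x))
      (f.continuous.max (continuous_const.mul f.continuous)))
    (RPC.integrable μ (f := fun x => max (g x) (k * g x))
      (g.continuous.max (continuous_const.mul g.continuous)))]
  refine integral_mono (RPC.integrable μ (((f.continuous.add g.continuous)).max
    (continuous_const.mul (f.continuous.add g.continuous)))) (Integrable.add
    (RPC.integrable μ (f.continuous.max (continuous_const.mul f.continuous)))
    (RPC.integrable μ (g.continuous.max (continuous_const.mul g.continuous)))) fun x => ?_
  simp only [ContinuousMap.add_apply, mul_add]
  exact max_le (add_le_add (le_max_left _ _) (le_max_left _ _))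
    (add_le_add (le_max_right _ _) (le_max_right _ _))

lemma Q_smul (hk0 : 0 ≤ k) {c : ℝ} (hc : 0 ≤ c) (f : C(Z, ℝ)) :
    Q μ k (c • f) = c * Q μ k f := by
  rw [Q, Q, ← integral_const_mul]
  refine integral_congr_ae (Filter.Eventually.of_forall fun x => ?_)
  simp only [ContinuousMap.smul_apply, smul_eq_mul]
  rw [mul_max_of_nonneg _ _ hc]
  ring_nf

lemma Q_of_nonneg (hk1 : k ≤ 1) {f : C(Z, ℝ)} (hf : ∀ x, 0 ≤ f x) :
    Q μ k f = ∫ x, f x ∂μ := by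
  refine integral_congr_ae (Filter.Eventually.of_forall fun x => ?_)
  exact max_eq_left (by nlinarith [hf x])

lemma Q_neg_of_nonneg (hk0 : 0 ≤ k) (hk1 : k ≤ 1) {f : C(Z, ℝ)} (hf : ∀ x, 0 ≤ f x) :
    Q μ k (-f) = -(k * ∫ x, f x ∂μ) := by
  rw [Q, ← integral_const_mul, ← integral_neg]
  refine integral_congr_ae (Filter.Eventually.of_forall fun x => ?_)
  simp only [ContinuousMap.neg_apply]
  rw [max_eq_right (by nlinarith [hf x])]
  ring

lemma Q_const (hk1 : k ≤ 1) {c : ℝ} (hc : 0 ≤ c) :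
    Q μ k (ContinuousMap.const Z c) = c * (μ univ).toReal := by
  rw [Q_of_nonneg μ hk1 (fun x => hc)]
  simp [mul_comm, measureReal_def]

end RPC

end RPCQ


section RPCHB

namespace RPC

variable {Z : Type*} [MetricSpace Z] [CompactSpace Z] [MeasurableSpace Z] [BorelSpace Z]

/-- Admissible upper bounds for the sublinear functional in the Hahn–Banach argument. -/
def P (μX μY : Measure Z) (ε k : ℝ) (h : C(Z × Z, ℝ)) : Set ℝ :=
  {r | ∃ f g : C(Z, ℝ), (∀ x y : Z, dist x y ≤ ε → h (x, y) ≤ f x + g y) ∧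
    Q μX k f + Q μY k g ≤ r}

/-- The sublinear functional dominating the coupling functional. -/
noncomputable def pfn (μX μY : Measure Z) (ε k : ℝ) (h : C(Z × Z, ℝ)) : ℝ :=
  sInf (P μX μY ε k h)

variable (μX μY : Measure Z) [IsFiniteMeasure μX] [IsFiniteMeasure μY] {ε k : ℝ}

lemma P_nonempty (h : C(Z × Z, ℝ)) : (P μX μY ε k h).Nonempty := by
  refine ⟨Q μX k (ContinuousMap.const Z ‖h‖) + Q μY k 0, ContinuousMap.const Z ‖h‖, 0,
    fun x y _ => ?_, le_rfl⟩
  simp only [ContinuousMap.const_apply, ContinuousMap.zero_apply, add_zero]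
  exact (le_abs_self _).trans (h.norm_coe_le_norm (x, y))

lemma P_lb (hk0 : 0 ≤ k) (hk1 : k ≤ 1)
    (hstar : ∀ f g : C(Z, ℝ), (∀ x y : Z, dist x y ≤ ε → 0 ≤ f x + g y) →
      0 ≤ Q μX k f + Q μY k g)
    (h : C(Z × Z, ℝ)) : ∀ r ∈ P μX μY ε k h, -(2 * ‖h‖ * (μX univ).toReal) ≤ r := by
  rintro r ⟨f, g, hcon, hq⟩
  have hcon' : ∀ x y : Z, dist x y ≤ ε →
      0 ≤ (f + ContinuousMap.const Z ‖h‖) x + g y := by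
    intro x y hd
    have h2 : |h (x, y)| ≤ ‖h‖ := by
      simpa [Real.norm_eq_abs] using h.norm_coe_le_norm (x, y)
    have h1 : -‖h‖ ≤ h (x, y) := (neg_le_neg h2).trans (neg_abs_le _)
    simp only [ContinuousMap.add_apply, ContinuousMap.const_apply]
    have := hcon x y hd
    linarith
  have hs := hstar _ _ hcon'
  have hadd := Q_add_le μX hk0 f (ContinuousMap.const Z ‖h‖)
  have hc := Q_const μX hk1 (norm_nonneg h)
  have hnn : 0 ≤ ‖h‖ * (μX univ).toReal :=
    mul_nonneg (norm_nonneg h) ENNReal.toReal_nonneg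
  nlinarith [hnn]

lemma P_bddBelow (hk0 : 0 ≤ k) (hk1 : k ≤ 1)
    (hstar : ∀ f g : C(Z, ℝ), (∀ x y : Z, dist x y ≤ ε → 0 ≤ f x + g y) →
      0 ≤ Q μX k f + Q μY k g)
    (h : C(Z × Z, ℝ)) : BddBelow (P μX μY ε k h) :=
  ⟨_, P_lb μX μY hk0 hk1 hstar h⟩

lemma pfn_le (hk0 : 0 ≤ k) (hk1 : k ≤ 1)
    (hstar : ∀ f g : C(Z, ℝ), (∀ x y : Z, dist x y ≤ ε → 0 ≤ f x + g y) →
      0 ≤ Q μX k f + Q μY k g)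
    {h : C(Z × Z, ℝ)} {f g : C(Z, ℝ)}
    (hcon : ∀ x y : Z, dist x y ≤ ε → h (x, y) ≤ f x + g y) :
    pfn μX μY ε k h ≤ Q μX k f + Q μY k g :=
  csInf_le (P_bddBelow μX μY hk0 hk1 hstar h) ⟨f, g, hcon, le_rfl⟩

lemma pfn_add (hk0 : 0 ≤ k) (hk1 : k ≤ 1)
    (hstar : ∀ f g : C(Z, ℝ), (∀ x y : Z, dist x y ≤ ε → 0 ≤ f x + g y) →
      0 ≤ Q μX k f + Q μY k g)
    (h₁ h₂ : C(Z × Z, ℝ)) :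
    pfn μX μY ε k (h₁ + h₂) ≤ pfn μX μY ε k h₁ + pfn μX μY ε k h₂ := by
  have key : ∀ r₁ ∈ P μX μY ε k h₁, ∀ r₂ ∈ P μX μY ε k h₂,
      pfn μX μY ε k (h₁ + h₂) ≤ r₁ + r₂ := by
    rintro r₁ ⟨f₁, g₁, hc₁, hq₁⟩ r₂ ⟨f₂, g₂, hc₂, hq₂⟩
    refine csInf_le (P_bddBelow μX μY hk0 hk1 hstar _) ⟨f₁ + f₂, g₁ + g₂, fun x y hd => ?_, ?_⟩
    · simp only [ContinuousMap.add_apply]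
      have := hc₁ x y hd; have := hc₂ x y hd; linarith
    · have := Q_add_le μX hk0 f₁ f₂
      have := Q_add_le μY hk0 g₁ g₂
      linarith
  have h2 : ∀ r₁ ∈ P μX μY ε k h₁, pfn μX μY ε k (h₁ + h₂) - r₁ ≤ pfn μX μY ε k h₂ := by
    intro r₁ hr₁
    refine le_csInf (P_nonempty μX μY h₂) fun r₂ hr₂ => ?_
    have := key r₁ hr₁ r₂ hr₂; linarith
  have h3 : pfn μX μY ε k (h₁ + h₂) - pfn μX μY ε k h₂ ≤ pfn μX μY ε k h₁ := by
    refine le_csInf (P_nonempty μX μY h₁) fun r₁ hr₁ => ?_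
    have := h2 r₁ hr₁; linarith
  linarith

lemma pfn_smul_le (hk0 : 0 ≤ k) (hk1 : k ≤ 1)
    (hstar : ∀ f g : C(Z, ℝ), (∀ x y : Z, dist x y ≤ ε → 0 ≤ f x + g y) →
      0 ≤ Q μX k f + Q μY k g)
    {c : ℝ} (hc : 0 < c) (h : C(Z × Z, ℝ)) :
    pfn μX μY ε k (c • h) ≤ c * pfn μX μY ε k h := by
  have key : ∀ r ∈ P μX μY ε k h, pfn μX μY ε k (c • h) ≤ c * r := by
    rintro r ⟨f, g, hcon, hq⟩
    refine csInf_le (P_bddBelow μX μY hk0 hk1 hstar _) ⟨c • f, c • g, fun x y hd => ?_, ?_⟩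
    · simp only [ContinuousMap.smul_apply, smul_eq_mul]
      have := hcon x y hd; nlinarith
    · rw [Q_smul μX hk0 hc.le, Q_smul μY hk0 hc.le]
      nlinarith
  have : pfn μX μY ε k (c • h) / c ≤ pfn μX μY ε k h := by
    refine le_csInf (P_nonempty μX μY h) fun r hr => ?_
    rw [div_le_iff₀ hc, mul_comm]
    exact key r hr
  calc pfn μX μY ε k (c • h) = c * (pfn μX μY ε k (c • h) / c) := by field_simp
    _ ≤ c * pfn μX μY ε k h := by nlinarith

lemma pfn_smul (hk0 : 0 ≤ k) (hk1 : k ≤ 1)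
    (hstar : ∀ f g : C(Z, ℝ), (∀ x y : Z, dist x y ≤ ε → 0 ≤ f x + g y) →
      0 ≤ Q μX k f + Q μY k g)
    {c : ℝ} (hc : 0 < c) (h : C(Z × Z, ℝ)) :
    pfn μX μY ε k (c • h) = c * pfn μX μY ε k h := by
  refine le_antisymm (pfn_smul_le μX μY hk0 hk1 hstar hc h) ?_
  have h2 := pfn_smul_le μX μY hk0 hk1 hstar (inv_pos.mpr hc) (c • h)
  rw [inv_smul_smul₀ hc.ne' h] at h2
  calc c * pfn μX μY ε k h ≤ c * (c⁻¹ * pfn μX μY ε k (c • h)) := by nlinarith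
    _ = pfn μX μY ε k (c • h) := by field_simp

lemma pfn_zero_nonneg (hk0 : 0 ≤ k) (hk1 : k ≤ 1)
    (hstar : ∀ f g : C(Z, ℝ), (∀ x y : Z, dist x y ≤ ε → 0 ≤ f x + g y) →
      0 ≤ Q μX k f + Q μY k g) :
    0 ≤ pfn μX μY ε k 0 := by
  refine le_csInf (P_nonempty μX μY 0) fun r hr => ?_
  have := P_lb μX μY hk0 hk1 hstar 0 r hr
  simpa using this

lemma exists_Lambda (hk0 : 0 ≤ k) (hk1 : k ≤ 1)
    (hstar : ∀ f g : C(Z, ℝ), (∀ x y : Z, dist x y ≤ ε → 0 ≤ f x + g y) →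
      0 ≤ Q μX k f + Q μY k g) :
    ∃ Λ : C(Z × Z, ℝ) →ₗ[ℝ] ℝ, ∀ h, Λ h ≤ pfn μX μY ε k h := by
  obtain ⟨Λ, -, hΛ⟩ := exists_extension_of_le_sublinear
    ⟨⊥, 0⟩ (pfn μX μY ε k)
    (fun c hc x => pfn_smul μX μY hk0 hk1 hstar hc x)
    (fun x y => pfn_add μX μY hk0 hk1 hstar x y)
    (fun x => by
      obtain ⟨v, hv⟩ := x
      simp only [Submodule.mem_bot] at hv
      subst hv
      simpa using pfn_zero_nonneg μX μY hk0 hk1 hstar)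
  exact ⟨Λ, hΛ⟩

end RPC

end RPCHB


section RPCContent

namespace RPC

variable {Z : Type*} [MetricSpace Z] [CompactSpace Z] [MeasurableSpace Z] [BorelSpace Z]

/-- The values of `Λ` on functions dominating the indicator of `C`. -/
def rset (Λ : C(Z × Z, ℝ) →ₗ[ℝ] ℝ) (C : Set (Z × Z)) : Set ℝ :=
  {r | ∃ f : C(Z × Z, ℝ), (∀ p, 0 ≤ f p) ∧ (∀ p ∈ C, 1 ≤ f p) ∧ Λ f = r}

/-- The Riesz content associated to a positive functional `Λ`. -/
noncomputable def rc (Λ : C(Z × Z, ℝ) →ₗ[ℝ] ℝ) (C : Set (Z × Z)) : ℝ :=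
  sInf (rset Λ C)

variable (Λ : C(Z × Z, ℝ) →ₗ[ℝ] ℝ)
    (hpos : ∀ f : C(Z × Z, ℝ), (∀ p, 0 ≤ f p) → 0 ≤ Λ f)

lemma rset_nonempty (C : Set (Z × Z)) : (rset Λ C).Nonempty :=
  ⟨Λ 1, 1, fun _ => zero_le_one, fun _ _ => le_rfl, rfl⟩

include hpos in
lemma rset_lb (C : Set (Z × Z)) : ∀ r ∈ rset Λ C, 0 ≤ r := by
  rintro r ⟨f, hf0, _, rfl⟩
  exact hpos f hf0

include hpos in
lemma rc_bddBelow (C : Set (Z × Z)) : BddBelow (rset Λ C) :=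
  ⟨0, rset_lb Λ hpos C⟩

include hpos in
lemma rc_nonneg (C : Set (Z × Z)) : 0 ≤ rc Λ C :=
  le_csInf (rset_nonempty Λ C) (rset_lb Λ hpos C)

include hpos in
lemma rc_le {C : Set (Z × Z)} {f : C(Z × Z, ℝ)} (hf0 : ∀ p, 0 ≤ f p)
    (hf1 : ∀ p ∈ C, 1 ≤ f p) : rc Λ C ≤ Λ f :=
  csInf_le (rc_bddBelow Λ hpos C) ⟨f, hf0, hf1, rfl⟩

include hpos in
lemma rc_mono {C₁ C₂ : Set (Z × Z)} (h : C₁ ⊆ C₂) : rc Λ C₁ ≤ rc Λ C₂ := by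
  refine csInf_le_csInf (rc_bddBelow Λ hpos C₁) (rset_nonempty Λ C₂) ?_
  rintro r ⟨f, hf0, hf1, rfl⟩
  exact ⟨f, hf0, fun p hp => hf1 p (h hp), rfl⟩

include hpos in
lemma rc_sup_le (C₁ C₂ : Set (Z × Z)) : rc Λ (C₁ ∪ C₂) ≤ rc Λ C₁ + rc Λ C₂ := by
  have key : ∀ r₁ ∈ rset Λ C₁, ∀ r₂ ∈ rset Λ C₂, rc Λ (C₁ ∪ C₂) ≤ r₁ + r₂ := by
    rintro r₁ ⟨f₁, hf₁0, hf₁1, rfl⟩ r₂ ⟨f₂, hf₂0, hf₂1, rfl⟩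
    have : rc Λ (C₁ ∪ C₂) ≤ Λ (f₁ + f₂) := by
      refine rc_le Λ hpos (fun p => ?_) (fun p hp => ?_)
      · simp only [ContinuousMap.add_apply]
        exact add_nonneg (hf₁0 p) (hf₂0 p)
      · simp only [ContinuousMap.add_apply]
        rcases hp with hp | hp
        · have := hf₁1 p hp; have := hf₂0 p; linarith
        · have := hf₂1 p hp; have := hf₁0 p; linarith
    rwa [map_add] at this
  have h2 : ∀ r₁ ∈ rset Λ C₁, rc Λ (C₁ ∪ C₂) - r₁ ≤ rc Λ C₂ := by
    intro r₁ hr₁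
    refine le_csInf (rset_nonempty Λ C₂) fun r₂ hr₂ => ?_
    have := key r₁ hr₁ r₂ hr₂; linarith
  have h3 : rc Λ (C₁ ∪ C₂) - rc Λ C₂ ≤ rc Λ C₁ := by
    refine le_csInf (rset_nonempty Λ C₁) fun r₁ hr₁ => ?_
    have := h2 r₁ hr₁; linarith
  linarith

include hpos in
lemma rc_sup_disjoint {C₁ C₂ : Set (Z × Z)} (hd : Disjoint C₁ C₂)
    (h₁ : IsClosed C₁) (h₂ : IsCompact C₂) :
    rc Λ C₁ + rc Λ C₂ ≤ rc Λ (C₁ ∪ C₂) := by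
  obtain ⟨u, hu2, hu1, hu01⟩ :=
    exists_continuous_zero_one_of_isCompact h₂ h₁ hd.symm
  refine le_csInf (rset_nonempty Λ _) ?_
  rintro r ⟨f, hf0, hf1, rfl⟩
  have e1 : rc Λ C₁ ≤ Λ (f * u) := by
    refine rc_le Λ hpos (fun p => mul_nonneg (hf0 p) (hu01 p).1) (fun p hp => ?_)
    have h1 : u p = 1 := hu1 hp
    have h2 : 1 ≤ f p := hf1 p (Or.inl hp)
    simp only [ContinuousMap.mul_apply, h1, mul_one]
    exact h2
  have e2 : rc Λ C₂ ≤ Λ (f * (1 - u)) := by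
    refine rc_le Λ hpos (fun p => mul_nonneg (hf0 p) (by
      simp only [ContinuousMap.sub_apply, ContinuousMap.one_apply]
      linarith [(hu01 p).2])) (fun p hp => ?_)
    have h1 : u p = 0 := hu2 hp
    have h2 : 1 ≤ f p := hf1 p (Or.inr hp)
    simp only [ContinuousMap.mul_apply, ContinuousMap.sub_apply, ContinuousMap.one_apply, h1]
    linarith
  have e3 : Λ (f * u) + Λ (f * (1 - u)) = Λ f := by
    rw [← map_add]
    congr 1
    ring
  linarith

/-- The content on `Z × Z` associated to the positive functional `Λ`. -/
noncomputable def cont (hpos : ∀ f : C(Z × Z, ℝ), (∀ p, 0 ≤ f p) → 0 ≤ Λ f) :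
    Content (Z × Z) where
  toFun C := (rc Λ C).toNNReal
  mono' C₁ C₂ h := Real.toNNReal_mono (rc_mono Λ hpos h)
  sup_disjoint' C₁ C₂ hd h₁ h₂ := by
    have heq : rc Λ (↑(C₁ ⊔ C₂) : Set (Z × Z)) = rc Λ C₁ + rc Λ C₂ := by
      refine le_antisymm ?_ ?_
      · simpa [TopologicalSpace.Compacts.coe_sup] using rc_sup_le Λ hpos C₁ C₂
      · simpa [TopologicalSpace.Compacts.coe_sup] using
          rc_sup_disjoint Λ hpos hd h₁ C₂.2
    show (rc Λ (↑(C₁ ⊔ C₂) : Set (Z × Z))).toNNReal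
        = (rc Λ (C₁ : Set (Z × Z))).toNNReal + (rc Λ (C₂ : Set (Z × Z))).toNNReal
    rw [heq, Real.toNNReal_add (rc_nonneg Λ hpos _) (rc_nonneg Λ hpos _)]
  sup_le' C₁ C₂ := by
    calc (rc Λ (↑(C₁ ⊔ C₂) : Set (Z × Z))).toNNReal
        ≤ (rc Λ C₁ + rc Λ C₂).toNNReal := by
          refine Real.toNNReal_mono ?_
          simpa [TopologicalSpace.Compacts.coe_sup] using rc_sup_le Λ hpos C₁ C₂
      _ ≤ (rc Λ C₁).toNNReal + (rc Λ C₂).toNNReal := Real.toNNReal_add_le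

end RPC

end RPCContent

section RPCMain

variable {Z : Type*} [MetricSpace Z] [CompactSpace Z] [MeasurableSpace Z] [BorelSpace Z]

namespace RPC

/-- Key layer-cake estimate: one half of the dual feasibility inequality. -/
lemma star_half (μ ν : Measure Z) [IsFiniteMeasure μ] [IsFiniteMeasure ν] {ε δ : ℝ}
    (hε : 0 ≤ ε) (hδ : 0 ≤ δ)
    (hyp : ∀ A : Set Z, MeasurableSet A → ν A ≤ ENNReal.ofReal (Real.exp δ) * μ (cthickening ε A))
    (f g : C(Z, ℝ)) (hfg : ∀ x y : Z, dist x y ≤ ε → 0 ≤ f x + g y) :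
    Real.exp (-δ) * ∫ y, max (-g y) 0 ∂ν ≤ ∫ x, max (f x) 0 ∂μ := by
  set g' : Z → ℝ := fun y => max (-g y) 0 with hg'
  set f' : Z → ℝ := fun x => max (f x) 0 with hf'
  have hg'c : Continuous g' := (g.continuous.neg).max continuous_const
  have hf'c : Continuous f' := f.continuous.max continuous_const
  have key : ∀ t : ℝ, 0 < t →
      ENNReal.ofReal (Real.exp (-δ)) * ν {y | t < g' y} ≤ μ {x | t ≤ f' x} := by
    intro t ht
    have hset : {y | t < g' y} = {y : Z | g y < -t} := by
      ext y
      simp only [mem_setOf_eq, hg', lt_max_iff]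
      constructor
      · rintro (h | h)
        · linarith
        · linarith
      · intro h
        left; linarith
    have hincl : cthickening ε {y : Z | g y < -t} ⊆ {x | t ≤ f' x} := by
      intro x hx
      rcases eq_empty_or_nonempty {y : Z | g y < -t} with hA | hA
      · rw [hA, cthickening_empty] at hx
        exact absurd hx (notMem_empty x)
      · have hclA : IsCompact (closure {y : Z | g y < -t}) :=
          IsCompact.of_isClosed_subset isCompact_univ isClosed_closure (subset_univ _)
        obtain ⟨y, hy, hyd⟩ := hclA.exists_infEdist_eq_edist hA.closure x
        rw [EMetric.infEdist_closure] at hyd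
        rw [mem_cthickening_iff, hyd] at hx
        have hd : dist x y ≤ ε := (edist_le_ofReal hε).mp hx
        have hyle : g y ≤ -t := by
          have hsub : closure {y : Z | g y < -t} ⊆ {y : Z | g y ≤ -t} :=
            closure_minimal (fun z hz => le_of_lt (show g z < -t from hz))
              (isClosed_le g.continuous continuous_const)
          exact hsub hy
        have := hfg x y hd
        simp only [hf', mem_setOf_eq, le_max_iff]
        left; linarith
    have hAm : MeasurableSet {y : Z | g y < -t} :=
      (isOpen_lt g.continuous continuous_const).measurableSet
    calc ENNReal.ofReal (Real.exp (-δ)) * ν {y | t < g' y}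
        = ENNReal.ofReal (Real.exp (-δ)) * ν {y : Z | g y < -t} := by rw [hset]
      _ ≤ ENNReal.ofReal (Real.exp (-δ)) *
          (ENNReal.ofReal (Real.exp δ) * μ (cthickening ε {y : Z | g y < -t})) :=
            mul_le_mul_right (hyp _ hAm) _
      _ = (ENNReal.ofReal (Real.exp (-δ)) * ENNReal.ofReal (Real.exp δ)) *
          μ (cthickening ε {y : Z | g y < -t}) := by rw [mul_assoc]
      _ = μ (cthickening ε {y : Z | g y < -t}) := by
            rw [← ENNReal.ofReal_mul (Real.exp_nonneg _), ← Real.exp_add, neg_add_cancel,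
              Real.exp_zero, ENNReal.ofReal_one, one_mul]
      _ ≤ μ {x | t ≤ f' x} := measure_mono hincl
  have hgl : ∫⁻ y, ENNReal.ofReal (g' y) ∂ν = ∫⁻ t in Ioi (0:ℝ), ν {y | t < g' y} :=
    lintegral_eq_lintegral_meas_lt ν
      (Filter.Eventually.of_forall fun y => le_max_right _ _) hg'c.aemeasurable
  have hfl : ∫⁻ x, ENNReal.ofReal (f' x) ∂μ = ∫⁻ t in Ioi (0:ℝ), μ {x | t ≤ f' x} :=
    lintegral_eq_lintegral_meas_le μ
      (Filter.Eventually.of_forall fun x => le_max_right _ _) hf'c.aemeasurable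
  have hmain : ENNReal.ofReal (Real.exp (-δ)) * ∫⁻ y, ENNReal.ofReal (g' y) ∂ν ≤
      ∫⁻ x, ENNReal.ofReal (f' x) ∂μ := by
    rw [hgl, hfl, ← lintegral_const_mul' _ _ ENNReal.ofReal_ne_top]
    refine lintegral_mono_ae ((ae_restrict_iff' measurableSet_Ioi).mpr
      (Filter.Eventually.of_forall fun t ht => key t ht))
  have hfin : ∫⁻ x, ENNReal.ofReal (f' x) ∂μ ≠ ⊤ :=
    (Integrable.lintegral_lt_top (RPC.integrable μ hf'c)).ne
  have hgr : ∫ y, g' y ∂ν = (∫⁻ y, ENNReal.ofReal (g' y) ∂ν).toReal :=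
    integral_eq_lintegral_of_nonneg_ae
      (Filter.Eventually.of_forall fun y => le_max_right _ _) hg'c.aestronglyMeasurable
  have hfr : ∫ x, f' x ∂μ = (∫⁻ x, ENNReal.ofReal (f' x) ∂μ).toReal :=
    integral_eq_lintegral_of_nonneg_ae
      (Filter.Eventually.of_forall fun x => le_max_right _ _) hf'c.aestronglyMeasurable
  rw [hgr, hfr]
  calc Real.exp (-δ) * (∫⁻ y, ENNReal.ofReal (g' y) ∂ν).toReal
      = ((ENNReal.ofReal (Real.exp (-δ))) * ∫⁻ y, ENNReal.ofReal (g' y) ∂ν).toReal := by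
        rw [ENNReal.toReal_mul, ENNReal.toReal_ofReal (Real.exp_nonneg _)]
    _ ≤ (∫⁻ x, ENNReal.ofReal (f' x) ∂μ).toReal := ENNReal.toReal_mono hfin hmain

/-- Dual feasibility: the sublinear functional used in Hahn–Banach is nonneg at 0. -/
lemma star (μX μY : Measure Z) [IsFiniteMeasure μX] [IsFiniteMeasure μY] {ε δ : ℝ}
    (hε : 0 ≤ ε) (hδ : 0 ≤ δ)
    (hyp : ∀ A : Set Z, MeasurableSet A →
        μY A ≤ ENNReal.ofReal (Real.exp δ) * μX (Metric.cthickening ε A) ∧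
        μX A ≤ ENNReal.ofReal (Real.exp δ) * μY (Metric.cthickening ε A))
    (f g : C(Z, ℝ)) (hfg : ∀ x y : Z, dist x y ≤ ε → 0 ≤ f x + g y) :
    0 ≤ Q μX (Real.exp (-δ)) f + Q μY (Real.exp (-δ)) g := by
  have hk0 : (0:ℝ) ≤ Real.exp (-δ) := (Real.exp_pos _).le
  have hk1 : Real.exp (-δ) ≤ 1 := Real.exp_le_one_iff.mpr (by linarith)
  rw [Q_eq_sub μX hk0 hk1, Q_eq_sub μY hk0 hk1]
  have h1 := star_half μX μY hε hδ (fun A hA => (hyp A hA).1) f g hfg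
  have h2 := star_half μY μX hε hδ (fun A hA => (hyp A hA).2) g f
    (fun x y hd => by rw [add_comm]; exact hfg y x (by rwa [dist_comm]))
  linarith

/-- The main construction: an approximate coupling from relative Prokhorov closeness. -/
lemma exists_coupling (μX μY : Measure Z) [IsFiniteMeasure μX] [IsFiniteMeasure μY] {ε δ : ℝ}
    (hε : 0 ≤ ε) (hδ : 0 ≤ δ)
    (hyp : ∀ A : Set Z, MeasurableSet A →
        μY A ≤ ENNReal.ofReal (Real.exp δ) * μX (Metric.cthickening ε A) ∧
        μX A ≤ ENNReal.ofReal (Real.exp δ) * μY (Metric.cthickening ε A)) :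
    ∃ γ : Measure (Z × Z),
      ENNReal.ofReal (Real.exp (-δ)) • μX ≤ γ.map Prod.fst ∧ γ.map Prod.fst ≤ μX ∧
      ENNReal.ofReal (Real.exp (-δ)) • μY ≤ γ.map Prod.snd ∧ γ.map Prod.snd ≤ μY ∧
      γ {p : Z × Z | ε < dist p.1 p.2} = 0 := by
  set k := Real.exp (-δ) with hk
  have hk0 : (0:ℝ) ≤ k := (Real.exp_pos _).le
  have hk1 : k ≤ 1 := Real.exp_le_one_iff.mpr (by linarith)
  have hstar : ∀ f g : C(Z, ℝ), (∀ x y : Z, dist x y ≤ ε → 0 ≤ f x + g y) →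
      0 ≤ Q μX k f + Q μY k g := fun f g hfg => star μX μY hε hδ hyp f g hfg
  obtain ⟨Λ, hΛ⟩ := exists_Lambda μX μY hk0 hk1 hstar
  have hLle : ∀ (h : C(Z × Z, ℝ)) (f g : C(Z, ℝ)),
      (∀ x y : Z, dist x y ≤ ε → h (x, y) ≤ f x + g y) → Λ h ≤ Q μX k f + Q μY k g :=
    fun h f g hcon => (hΛ h).trans (pfn_le μX μY hk0 hk1 hstar hcon)
  have hLnonpos : ∀ h : C(Z × Z, ℝ), (∀ x y : Z, dist x y ≤ ε → h (x, y) ≤ 0) → Λ h ≤ 0 := by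
    intro h hh
    have := hLle h 0 0 (fun x y hd => by simpa using hh x y hd)
    simpa [Q_zero] using this
  have hLpos : ∀ f : C(Z × Z, ℝ), (∀ p, 0 ≤ f p) → 0 ≤ Λ f := by
    intro f hf
    have h1 := hLnonpos (-f) (fun x y hd => by simpa using hf (x, y))
    rw [map_neg] at h1; linarith
  have hLmono : ∀ h₁ h₂ : C(Z × Z, ℝ),
      (∀ x y : Z, dist x y ≤ ε → h₁ (x, y) ≤ h₂ (x, y)) → Λ h₁ ≤ Λ h₂ := by
    intro h₁ h₂ hcon
    have h1 := hLnonpos (h₁ - h₂) (fun x y hd => by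
      simp only [ContinuousMap.sub_apply]
      linarith [hcon x y hd])
    rw [map_sub] at h1; linarith
  set π₁ : C(Z × Z, Z) := ⟨Prod.fst, continuous_fst⟩ with hπ₁
  set π₂ : C(Z × Z, Z) := ⟨Prod.snd, continuous_snd⟩ with hπ₂
  have hfst_le : ∀ u : C(Z, ℝ), (∀ x, 0 ≤ u x) → Λ (u.comp π₁) ≤ ∫ x, u x ∂μX := by
    intro u hu
    have h1 := hLle (u.comp π₁) u 0 (fun x y hd => by simp [hπ₁])
    rwa [Q_zero, add_zero, Q_of_nonneg μX hk1 hu] at h1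
  have hfst_ge : ∀ u : C(Z, ℝ), (∀ x, 0 ≤ u x) → k * ∫ x, u x ∂μX ≤ Λ (u.comp π₁) := by
    intro u hu
    have h1 := hLle (-(u.comp π₁)) (-u) 0 (fun x y hd => by simp [hπ₁])
    rw [map_neg, Q_zero, add_zero, Q_neg_of_nonneg μX hk0 hk1 hu] at h1
    linarith
  have hsnd_le : ∀ u : C(Z, ℝ), (∀ x, 0 ≤ u x) → Λ (u.comp π₂) ≤ ∫ y, u y ∂μY := by
    intro u hu
    have h1 := hLle (u.comp π₂) 0 u (fun x y hd => by simp [hπ₂])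
    rwa [Q_zero, zero_add, Q_of_nonneg μY hk1 hu] at h1
  have hsnd_ge : ∀ u : C(Z, ℝ), (∀ x, 0 ≤ u x) → k * ∫ y, u y ∂μY ≤ Λ (u.comp π₂) := by
    intro u hu
    have h1 := hLle (-(u.comp π₂)) 0 (-u) (fun x y hd => by simp [hπ₂])
    rw [map_neg, Q_zero, zero_add, Q_neg_of_nonneg μY hk0 hk1 hu] at h1
    linarith
  set κ : Content (Z × Z) := cont Λ hLpos with hκ
  set γ : Measure (Z × Z) := κ.measure with hγ
  have hopen : ∀ (U : Set (Z × Z)) (hU : IsOpen U),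
      γ U = κ.innerContent ⟨U, hU⟩ := by
    intro U hU
    rw [hγ, κ.measure_apply hU.measurableSet]
    exact κ.outerMeasure_of_isOpen U hU
  have hκle : ∀ (Cs : TopologicalSpace.Compacts (Z × Z)) (f : C(Z × Z, ℝ)),
      (∀ p, 0 ≤ f p) → (∀ p ∈ (Cs : Set (Z × Z)), 1 ≤ f p) →
      (κ Cs : ℝ≥0∞) ≤ ENNReal.ofReal (Λ f) := by
    intro Cs f h0 h1
    exact ENNReal.coe_le_coe.mpr (Real.toNNReal_mono (rc_le Λ hLpos h0 h1))
  have huniv : γ univ = ENNReal.ofReal (Λ 1) := by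
    rw [hopen univ isOpen_univ]
    refine le_antisymm ?_ ?_
    · exact iSup₂_le fun C hC => hκle C 1 (fun p => zero_le_one) (fun p hp => le_rfl)
    · have h1 : Λ 1 ≤ rc Λ (univ : Set (Z × Z)) := by
        refine le_csInf (rset_nonempty Λ _) ?_
        rintro r ⟨f, hf0, hf1, rfl⟩
        exact hLmono 1 f (fun x y hd => by simpa using hf1 (x, y) trivial)
      have h2 : ENNReal.ofReal (Λ 1) ≤ (κ ⟨univ, isCompact_univ⟩ : ℝ≥0∞) :=
        ENNReal.coe_le_coe.mpr (Real.toNNReal_mono h1)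
      exact h2.trans (κ.le_innerContent _ _ (subset_univ _))
  have side : ∀ (π : C(Z × Z, Z)) (μ : Measure Z), ∀ _ : IsFiniteMeasure μ,
      (∀ u : C(Z, ℝ), (∀ x, 0 ≤ u x) → Λ (u.comp π) ≤ ∫ x, u x ∂μ) →
      (∀ u : C(Z, ℝ), (∀ x, 0 ≤ u x) → k * ∫ x, u x ∂μ ≤ Λ (u.comp π)) →
      (∀ V : Set Z, IsOpen V → γ (π ⁻¹' V) ≤ μ V) ∧
      (∀ F : Set Z, IsClosed F → ENNReal.ofReal k * μ F ≤ γ (π ⁻¹' F)) := by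
    intro π μ hfinμ hle hge
    have hupper : ∀ V : Set Z, IsOpen V → γ (π ⁻¹' V) ≤ μ V := by
      intro V hV
      rw [hopen _ (hV.preimage π.continuous)]
      refine iSup₂_le fun C hC => ?_
      have hC' : (C : Set (Z × Z)) ⊆ π ⁻¹' V := hC
      have hDc : IsCompact (π '' (C : Set (Z × Z))) := C.2.image π.continuous
      have hDV : π '' (C : Set (Z × Z)) ⊆ V := image_subset_iff.mpr hC'
      have hVc : IsCompact (Vᶜ) :=
        IsCompact.of_isClosed_subset isCompact_univ hV.isClosed_compl (subset_univ _)
      obtain ⟨u, hu0, hu1, hu01⟩ := exists_continuous_zero_one_of_isCompact hVc hDc.isClosed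
        (disjoint_compl_left.mono_right hDV)
      refine (hκle C (u.comp π) (fun p => (hu01 _).1)
        (fun p hp => (hu1 (mem_image_of_mem π hp)).ge)).trans ?_
      have h1 : Λ (u.comp π) ≤ ∫ x, u x ∂μ := hle u (fun x => (hu01 x).1)
      have h2 : ∫ x, u x ∂μ ≤ (μ V).toReal := by
        have hind : ∀ x, u x ≤ V.indicator (fun _ => (1:ℝ)) x := by
          intro x
          by_cases hx : x ∈ V
          · simp only [indicator_of_mem hx]
            exact (hu01 x).2
          · simp only [indicator_of_notMem hx]
            exact le_of_eq (hu0 hx)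
        calc ∫ x, u x ∂μ ≤ ∫ x, V.indicator (fun _ => (1:ℝ)) x ∂μ :=
              integral_mono (RPC.integrable μ u.continuous)
                ((integrable_const 1).indicator hV.measurableSet) hind
          _ = (μ V).toReal := by
              rw [integral_indicator_const (1:ℝ) hV.measurableSet, smul_eq_mul, mul_one, measureReal_def]
      calc ENNReal.ofReal (Λ (u.comp π)) ≤ ENNReal.ofReal ((μ V).toReal) :=
            ENNReal.ofReal_le_ofReal (h1.trans h2)
        _ = μ V := ENNReal.ofReal_toReal (measure_ne_top μ V)
    refine ⟨hupper, ?_⟩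
    intro F hF
    have hq0 : k * (μ F).toReal ≤ Λ 1 := by
      have h1 := hge 1 (fun x => zero_le_one)
      have h2 : ((1 : C(Z, ℝ)).comp π) = (1 : C(Z × Z, ℝ)) := by ext p; simp
      rw [h2] at h1
      have h3 : ∫ x, (1 : C(Z, ℝ)) x ∂μ = (μ univ).toReal := by
        simp [integral_const, smul_eq_mul, measureReal_def]
      rw [h3] at h1
      have h4 : (μ F).toReal ≤ (μ univ).toReal :=
        ENNReal.toReal_mono (measure_ne_top μ univ) (measure_mono (subset_univ F))
      nlinarith
    have hb : γ (π ⁻¹' Fᶜ) ≤ ENNReal.ofReal (Λ 1 - k * (μ F).toReal) := by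
      rw [hopen _ (hF.isOpen_compl.preimage π.continuous)]
      refine iSup₂_le fun C hC => ?_
      have hC' : (C : Set (Z × Z)) ⊆ π ⁻¹' Fᶜ := hC
      have hDc : IsCompact (π '' (C : Set (Z × Z))) := C.2.image π.continuous
      have hDF : Disjoint F (π '' (C : Set (Z × Z))) := by
        rw [disjoint_left]
        intro a ha hmem
        exact (image_subset_iff.mpr hC' hmem) ha
      have hFc : IsCompact F :=
        IsCompact.of_isClosed_subset isCompact_univ hF (subset_univ _)
      obtain ⟨u, hu0, hu1, hu01⟩ :=
        exists_continuous_zero_one_of_isCompact hFc hDc.isClosed hDF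
      refine (hκle C (u.comp π) (fun p => (hu01 _).1)
        (fun p hp => (hu1 (mem_image_of_mem π hp)).ge)).trans ?_
      refine ENNReal.ofReal_le_ofReal ?_
      have e1 : Λ (u.comp π) + Λ (((1 : C(Z, ℝ)) - u).comp π) = Λ 1 := by
        rw [← map_add]
        congr 1
        ext p
        simp [ContinuousMap.comp_apply]
      have e2 : k * ∫ x, ((1 : C(Z, ℝ)) - u) x ∂μ ≤ Λ (((1 : C(Z, ℝ)) - u).comp π) :=
        hge _ (fun x => by
          simp only [ContinuousMap.sub_apply, ContinuousMap.one_apply]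
          linarith [(hu01 x).2])
      have e3 : (μ F).toReal ≤ ∫ x, ((1 : C(Z, ℝ)) - u) x ∂μ := by
        have hind : ∀ x, F.indicator (fun _ => (1:ℝ)) x ≤ ((1 : C(Z, ℝ)) - u) x := by
          intro x
          by_cases hx : x ∈ F
          · simp only [indicator_of_mem hx, ContinuousMap.sub_apply, ContinuousMap.one_apply,
              hu0 hx]
            norm_num
          · simp only [indicator_of_notMem hx, ContinuousMap.sub_apply,
              ContinuousMap.one_apply]
            linarith [(hu01 x).2]
        calc (μ F).toReal = ∫ x, F.indicator (fun _ => (1:ℝ)) x ∂μ := by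
              rw [integral_indicator_const (1:ℝ) hF.measurableSet, smul_eq_mul, mul_one, measureReal_def]
          _ ≤ ∫ x, ((1 : C(Z, ℝ)) - u) x ∂μ :=
              integral_mono ((integrable_const 1).indicator hF.measurableSet)
                (RPC.integrable μ ((1 : C(Z, ℝ)) - u).continuous) hind
      nlinarith [mul_le_mul_of_nonneg_left e3 hk0]
    have hsub : γ univ ≤ γ (π ⁻¹' F) + γ (π ⁻¹' Fᶜ) := by
      have hcov : (univ : Set (Z × Z)) ⊆ π ⁻¹' F ∪ π ⁻¹' Fᶜ := by
        intro p _
        by_cases hp : π p ∈ F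
        · exact Or.inl hp
        · exact Or.inr hp
      exact (measure_mono hcov).trans (measure_union_le _ _)
    calc ENNReal.ofReal k * μ F = ENNReal.ofReal (k * (μ F).toReal) := by
          rw [ENNReal.ofReal_mul hk0, ENNReal.ofReal_toReal (measure_ne_top μ F)]
      _ = ENNReal.ofReal (Λ 1 - (Λ 1 - k * (μ F).toReal)) := by
          rw [show Λ 1 - (Λ 1 - k * (μ F).toReal) = k * (μ F).toReal by ring]
      _ = ENNReal.ofReal (Λ 1) - ENNReal.ofReal (Λ 1 - k * (μ F).toReal) :=
          ENNReal.ofReal_sub _ (by linarith)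
      _ ≤ γ univ - γ (π ⁻¹' Fᶜ) := tsub_le_tsub huniv.ge hb
      _ ≤ γ (π ⁻¹' F) := tsub_le_iff_right.mpr hsub
  obtain ⟨hXup, hXlow⟩ := side π₁ μX inferInstance hfst_le hfst_ge
  obtain ⟨hYup, hYlow⟩ := side π₂ μY inferInstance hsnd_le hsnd_ge
  refine ⟨γ, ?_, ?_, ?_, ?_, ?_⟩
  · haveI : (ENNReal.ofReal k • μX).WeaklyRegular :=
      Measure.WeaklyRegular.smul ENNReal.ofReal_ne_top
    refine measure_le_of_isClosed ?_ ?_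
    · rw [Measure.smul_apply, smul_eq_mul]
      exact ENNReal.mul_ne_top ENNReal.ofReal_ne_top (measure_ne_top μX univ)
    · intro F hF
      rw [Measure.smul_apply, smul_eq_mul, Measure.map_apply measurable_fst hF.measurableSet]
      exact hXlow F hF
  · refine measure_le_of_isOpen ?_
    intro U hU
    rw [Measure.map_apply measurable_fst hU.measurableSet]
    exact hXup U hU
  · haveI : (ENNReal.ofReal k • μY).WeaklyRegular :=
      Measure.WeaklyRegular.smul ENNReal.ofReal_ne_top
    refine measure_le_of_isClosed ?_ ?_
    · rw [Measure.smul_apply, smul_eq_mul]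
      exact ENNReal.mul_ne_top ENNReal.ofReal_ne_top (measure_ne_top μY univ)
    · intro F hF
      rw [Measure.smul_apply, smul_eq_mul, Measure.map_apply measurable_snd hF.measurableSet]
      exact hYlow F hF
  · refine measure_le_of_isOpen ?_
    intro U hU
    rw [Measure.map_apply measurable_snd hU.measurableSet]
    exact hYup U hU
  · have hKc : IsOpen {p : Z × Z | ε < dist p.1 p.2} :=
      isOpen_lt continuous_const (continuous_fst.dist continuous_snd)
    rw [hopen _ hKc]
    refine le_antisymm (iSup₂_le fun C hC => ?_) zero_le
    have hKcl : IsClosed {p : Z × Z | dist p.1 p.2 ≤ ε} :=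
      isClosed_le (continuous_fst.dist continuous_snd) continuous_const
    have hKcpt : IsCompact {p : Z × Z | dist p.1 p.2 ≤ ε} :=
      IsCompact.of_isClosed_subset isCompact_univ hKcl (subset_univ _)
    have hdisj : Disjoint {p : Z × Z | dist p.1 p.2 ≤ ε} (C : Set (Z × Z)) := by
      rw [disjoint_left]
      intro p hp hpC
      have h1 : ε < dist p.1 p.2 := hC hpC
      exact absurd h1 (not_lt.mpr hp)
    obtain ⟨u, hu0, hu1, hu01⟩ :=
      exists_continuous_zero_one_of_isCompact hKcpt C.2.isClosed hdisj
    refine le_trans (hκle C u (fun p => (hu01 p).1) (fun p hp => (hu1 hp).ge)) ?_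
    have hΛu : Λ u ≤ 0 := hLnonpos u (fun x y hd => le_of_eq (hu0 hd))
    calc ENNReal.ofReal (Λ u) ≤ ENNReal.ofReal 0 := ENNReal.ofReal_le_ofReal hΛu
      _ = 0 := ENNReal.ofReal_zero

end RPC

end RPCMain

/-- Relative Prokhorov closeness is characterized by approximate coupling. -/
theorem relative_prokhorov_iff_approximate_coupling
    {Z : Type*} [MetricSpace Z] [CompactSpace Z] [MeasurableSpace Z] [BorelSpace Z]
    (μX μY : Measure Z) [IsFiniteMeasure μX] [IsFiniteMeasure μY]
    (ε δ : ℝ) (hε : 0 ≤ ε) (hδ : 0 ≤ δ) :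
    (∀ A : Set Z, MeasurableSet A →
        μY A ≤ ENNReal.ofReal (Real.exp δ) * μX (Metric.cthickening ε A) ∧
        μX A ≤ ENNReal.ofReal (Real.exp δ) * μY (Metric.cthickening ε A))
    ↔ ∃ (μX' μY' : Measure Z) (γ : Measure (Z × Z)),
        ENNReal.ofReal (Real.exp (-δ)) • μX ≤ μX' ∧ μX' ≤ μX ∧
        ENNReal.ofReal (Real.exp (-δ)) • μY ≤ μY' ∧ μY' ≤ μY ∧
        γ.map Prod.fst = μX' ∧ γ.map Prod.snd = μY' ∧
        γ {p : Z × Z | ε < dist p.1 p.2} = 0 := by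
  constructor
  · intro hyp
    obtain ⟨γ, h1, h2, h3, h4, h5⟩ := RPC.exists_coupling μX μY hε hδ hyp
    exact ⟨γ.map Prod.fst, γ.map Prod.snd, γ, h1, h2, h3, h4, rfl, rfl, h5⟩
  · rintro ⟨μX', μY', γ, hX1, hX2, hY1, hY2, hmapX, hmapY, hsupp⟩ A hA
    have hcm : MeasurableSet (cthickening ε A) := isClosed_cthickening.measurableSet
    have hexp : (ENNReal.ofReal (Real.exp δ)) * (ENNReal.ofReal (Real.exp (-δ))) = 1 := by
      rw [← ENNReal.ofReal_mul (Real.exp_nonneg _), ← Real.exp_add, add_neg_cancel,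
        Real.exp_zero, ENNReal.ofReal_one]
    constructor
    · -- μY A ≤ e^δ μX (A^ε)
      have incl : Prod.snd ⁻¹' A ⊆
          (Prod.fst ⁻¹' (cthickening ε A)) ∪ {p : Z × Z | ε < dist p.1 p.2} := by
        rintro ⟨x, y⟩ hy
        by_cases hd : dist x y ≤ ε
        · left
          rw [mem_preimage, mem_cthickening_iff]
          calc EMetric.infEdist x A ≤ edist x y := EMetric.infEdist_le_edist_of_mem hy
            _ ≤ ENNReal.ofReal ε := by
                rw [edist_dist]
                exact ENNReal.ofReal_le_ofReal hd
        · right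
          exact not_le.mp hd
      have h1 : γ (Prod.snd ⁻¹' A) ≤ γ (Prod.fst ⁻¹' (cthickening ε A)) := by
        calc γ (Prod.snd ⁻¹' A)
            ≤ γ ((Prod.fst ⁻¹' (cthickening ε A)) ∪ {p : Z × Z | ε < dist p.1 p.2}) :=
              measure_mono incl
          _ ≤ γ (Prod.fst ⁻¹' (cthickening ε A)) + γ {p : Z × Z | ε < dist p.1 p.2} :=
              measure_union_le _ _
          _ = γ (Prod.fst ⁻¹' (cthickening ε A)) := by rw [hsupp, add_zero]
      have e1 : ENNReal.ofReal (Real.exp (-δ)) * μY A ≤ γ (Prod.snd ⁻¹' A) := by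
        have h2 := Measure.le_iff'.mp hY1 A
        rw [Measure.smul_apply, smul_eq_mul] at h2
        rw [← hmapY, Measure.map_apply measurable_snd hA] at h2
        exact h2
      have e2 : γ (Prod.fst ⁻¹' (cthickening ε A)) ≤ μX (cthickening ε A) := by
        have h2 := Measure.le_iff'.mp hX2 (cthickening ε A)
        rw [← hmapX, Measure.map_apply measurable_fst hcm] at h2
        exact h2
      calc μY A = (ENNReal.ofReal (Real.exp δ) * ENNReal.ofReal (Real.exp (-δ))) * μY A := by
            rw [hexp, one_mul]
        _ = ENNReal.ofReal (Real.exp δ) * (ENNReal.ofReal (Real.exp (-δ)) * μY A) := by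
            rw [mul_assoc]
        _ ≤ ENNReal.ofReal (Real.exp δ) * μX (cthickening ε A) :=
            mul_le_mul_right ((e1.trans h1).trans e2) _
    · -- μX A ≤ e^δ μY (A^ε)
      have incl : Prod.fst ⁻¹' A ⊆
          (Prod.snd ⁻¹' (cthickening ε A)) ∪ {p : Z × Z | ε < dist p.1 p.2} := by
        rintro ⟨x, y⟩ hx
        by_cases hd : dist x y ≤ ε
        · left
          rw [mem_preimage, mem_cthickening_iff]
          calc EMetric.infEdist y A ≤ edist y x := EMetric.infEdist_le_edist_of_mem hx
            _ ≤ ENNReal.ofReal ε := by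
                rw [edist_comm, edist_dist]
                exact ENNReal.ofReal_le_ofReal hd
        · right
          exact not_le.mp hd
      have h1 : γ (Prod.fst ⁻¹' A) ≤ γ (Prod.snd ⁻¹' (cthickening ε A)) := by
        calc γ (Prod.fst ⁻¹' A)
            ≤ γ ((Prod.snd ⁻¹' (cthickening ε A)) ∪ {p : Z × Z | ε < dist p.1 p.2}) :=
              measure_mono incl
          _ ≤ γ (Prod.snd ⁻¹' (cthickening ε A)) + γ {p : Z × Z | ε < dist p.1 p.2} :=
              measure_union_le _ _
          _ = γ (Prod.snd ⁻¹' (cthickening ε A)) := by rw [hsupp, add_zero]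
      have e1 : ENNReal.ofReal (Real.exp (-δ)) * μX A ≤ γ (Prod.fst ⁻¹' A) := by
        have h2 := Measure.le_iff'.mp hX1 A
        rw [Measure.smul_apply, smul_eq_mul] at h2
        rw [← hmapX, Measure.map_apply measurable_fst hA] at h2
        exact h2
      have e2 : γ (Prod.snd ⁻¹' (cthickening ε A)) ≤ μY (cthickening ε A) := by
        have h2 := Measure.le_iff'.mp hY2 (cthickening ε A)
        rw [← hmapY, Measure.map_apply measurable_snd hcm] at h2
        exact h2
      calc μX A = (ENNReal.ofReal (Real.exp δ) * ENNReal.ofReal (Real.exp (-δ))) * μX A := by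
            rw [hexp, one_mul]
        _ = ENNReal.ofReal (Real.exp δ) * (ENNReal.ofReal (Real.exp (-δ)) * μX A) := by
            rw [mul_assoc]
        _ ≤ ENNReal.ofReal (Real.exp δ) * μY (cthickening ε A) :=
            mul_le_mul_right ((e1.trans h1).trans e2) _
end

section
/- (Dulmage–Mendelsohn) Let G be a bipartite graph with partite sets M and W, and let M₀ ⊂ M, W₀ ⊂ W be finite subsets such that for every subset A of M₀ or of W₀, the graph neighborhood N_G(A) satisfies |N_G(A)| ≥ |A|. Then G contains a matching covering M₀ ∪ W₀. -/
open Set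
universe u

lemma dm_exists_fun {M W : Type u} (E : Set (M × W)) (M₀ : Set M) (hM₀ : M₀.Finite)
    (hHall : ∀ A ⊆ M₀, Cardinal.mk ↥A ≤ Cardinal.mk ↥{w | ∃ m ∈ A, (m, w) ∈ E}) :
    ∃ f : ↥M₀ → W, Function.Injective f ∧ ∀ m : ↥M₀, ((m : M), f m) ∈ E := by
  classical
  haveI : Fintype ↥M₀ := hM₀.fintype
  set n := Fintype.card ↥M₀ with hn
  let N : ↥M₀ → Set W := fun m => {w | ((m : M), w) ∈ E}
  have hchoose : ∀ m : ↥M₀, ∃ t : Finset W, ↑t ⊆ N m ∧ (¬ (N m).Finite → t.card = n) ∧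
      ((N m).Finite → ↑t = N m) := by
    intro m
    by_cases h : (N m).Finite
    · exact ⟨h.toFinset, by simp, fun h' => absurd h h', fun _ => h.coe_toFinset⟩
    · obtain ⟨t, hts, htf, htc⟩ := (show (N m).Infinite from h).exists_subset_ncard_eq n
      refine ⟨htf.toFinset, by simpa using hts, fun _ => ?_, fun h' => absurd h' h⟩
      rw [← htc, Set.ncard_eq_toFinset_card _ htf]
  choose t ht1 ht2 ht3 using hchoose
  have hall : ∀ s : Finset ↥M₀, s.card ≤ (s.biUnion t).card := by
    intro s
    by_cases hinf : ∃ m ∈ s, ¬ (N m).Finite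
    · obtain ⟨m, hm, hmn⟩ := hinf
      calc s.card ≤ n := Finset.card_le_univ s
        _ = (t m).card := (ht2 m hmn).symm
        _ ≤ (s.biUnion t).card := Finset.card_le_card (Finset.subset_biUnion_of_mem t hm)
    · push_neg at hinf
      set s' : Finset M := s.image Subtype.val with hs'
      have hsub : ↑s' ⊆ M₀ := by
        intro x hx; simp [hs'] at hx; obtain ⟨hx, _⟩ := hx; exact hx
      have key := hHall ↑s' hsub
      have he : {w | ∃ m ∈ (↑s' : Set M), (m, w) ∈ E} = ↑(s.biUnion t) := by
        ext w
        simp only [mem_setOf_eq, Finset.coe_biUnion, mem_iUnion, Finset.mem_coe, hs',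
          Finset.coe_image, mem_image]
        constructor
        · rintro ⟨m, ⟨⟨mm, hmm, rfl⟩, hE⟩⟩
          refine ⟨mm, hmm, ?_⟩
          have : w ∈ (↑(t mm) : Set W) := by rw [ht3 mm (hinf mm hmm)]; exact hE
          exact this
        · rintro ⟨mm, hmm, hw⟩
          exact ⟨mm, ⟨mm, hmm, rfl⟩, ht1 mm hw⟩
      rw [he] at key
      rw [show Cardinal.mk ↥(↑s' : Set M) = s'.card from Cardinal.mk_coe_finset,
        show Cardinal.mk ↥(↑(s.biUnion t) : Set W) = (s.biUnion t).card from Cardinal.mk_coe_finset,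
        Nat.cast_le] at key
      calc s.card = s'.card := (Finset.card_image_of_injective s Subtype.coe_injective).symm
        _ ≤ _ := key
  obtain ⟨f, hinj, hf⟩ := (Finset.all_card_le_biUnion_card_iff_exists_injective t).mp hall
  exact ⟨f, hinj, fun m => ht1 m (hf m)⟩

/-- Alternating-chain predicate: `DMBad f g v` means that tracing the unique
alternating chain backwards from `v ∈ W₀` (via `f`-preimages and `g`-preimages)
terminates at an element of `W₀` not in the range of `f`. -/
inductive DMBad {M W : Type u} {M₀ : Set M} {W₀ : Set W}
    (f : ↥M₀ → W) (g : ↥W₀ → M) : W → Prop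
  | base (w : ↥W₀) (h : ∀ m : ↥M₀, f m ≠ (w : W)) : DMBad f g (w : W)
  | step (w : ↥W₀) (m : ↥M₀) (w' : ↥W₀) (hf : f m = (w : W)) (hg : g w' = (m : M))
      (hb : DMBad f g (w' : W)) : DMBad f g (w : W)

/-- Dulmage–Mendelsohn theorem for bipartite graphs: if every subset of `M₀`
and of `W₀` satisfies Hall's condition, then there is a matching covering
`M₀ ∪ W₀`. The bipartite graph is encoded by its edge set `E ⊆ M × W`. -/
theorem dulmage_mendelsohn
    {M W : Type u} (E : Set (M × W)) (M₀ : Set M) (W₀ : Set W)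
    (hM₀ : M₀.Finite) (hW₀ : W₀.Finite)
    (hHallM : ∀ A ⊆ M₀, Cardinal.mk ↥A ≤ Cardinal.mk ↥{w | ∃ m ∈ A, (m, w) ∈ E})
    (hHallW : ∀ B ⊆ W₀, Cardinal.mk ↥B ≤ Cardinal.mk ↥{m | ∃ w ∈ B, (m, w) ∈ E}) :
    ∃ S ⊆ E, (∀ p ∈ S, ∀ q ∈ S, p ≠ q → p.1 ≠ q.1 ∧ p.2 ≠ q.2) ∧
      (∀ m ∈ M₀, ∃ w, (m, w) ∈ S) ∧ (∀ w ∈ W₀, ∃ m, (m, w) ∈ S) := by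
  classical
  obtain ⟨f, hfinj, hfE⟩ := dm_exists_fun E M₀ hM₀ hHallM
  obtain ⟨g, hginj, hgE⟩ := dm_exists_fun {p : W × M | (p.2, p.1) ∈ E} W₀ hW₀ (by
    intro B hB
    simpa using hHallW B hB)
  -- A vertex of `M₀` is bad if its `g`-predecessor is bad.
  set BadM : ↥M₀ → Prop := fun m => ∃ w : ↥W₀, g w = (m : M) ∧ DMBad f g (w : W) with hBadM
  set S : Set (M × W) :=
    {p | ∃ m : ↥M₀, p = ((m : M), f m) ∧ ¬ BadM m} ∪
    {p | ∃ w : ↥W₀, p = (g w, (w : W)) ∧ DMBad f g (w : W)} with hS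
  have hSE : S ⊆ E := by
    rintro p (⟨m, rfl, -⟩ | ⟨w, rfl, -⟩)
    · exact hfE m
    · exact hgE w
  refine ⟨S, hSE, ?_, ?_, ?_⟩
  · -- matching condition
    -- first, two auxiliary facts
    have hA : ∀ (m : ↥M₀) (v : W), ¬ BadM m → DMBad f g v → f m ≠ v := by
      intro m v hm hv hfm
      cases hv with
      | base w₀ h => exact h m hfm
      | step w₀ m' w' hf hg hb =>
        have hmm : m' = m := hfinj (hf.trans hfm.symm)
        exact hm ⟨w', hmm ▸ hg, hb⟩
    have hB : ∀ (m : ↥M₀) (w : ↥W₀), ¬ BadM m → DMBad f g (w : W) → (m : M) ≠ g w := by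
      intro m w hm hw hmg
      exact hm ⟨w, hmg.symm, hw⟩
    rintro p (⟨m₁, rfl, hm₁⟩ | ⟨w₁, rfl, hw₁⟩) q (⟨m₂, rfl, hm₂⟩ | ⟨w₂, rfl, hw₂⟩) hpq
    · have hne : m₁ ≠ m₂ := fun h => hpq (by rw [h])
      exact ⟨fun h => hne (Subtype.ext h), fun h => hne (hfinj h)⟩
    · exact ⟨hB m₁ w₂ hm₁ hw₂, hA m₁ (w₂ : W) hm₁ hw₂⟩
    · exact ⟨fun h => hB m₂ w₁ hm₂ hw₁ h.symm, fun h => hA m₂ (w₁ : W) hm₂ hw₁ h.symm⟩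
    · have hne : w₁ ≠ w₂ := fun h => hpq (by rw [h])
      exact ⟨fun h => hne (hginj h), fun h => hne (Subtype.ext h)⟩
  · -- covers M₀
    intro m hm
    by_cases hbad : BadM ⟨m, hm⟩
    · obtain ⟨w, hgw, hw⟩ := hbad
      exact ⟨(w : W), Or.inr ⟨w, by rw [hgw], hw⟩⟩
    · exact ⟨f ⟨m, hm⟩, Or.inl ⟨⟨m, hm⟩, rfl, hbad⟩⟩
  · -- covers W₀
    intro w hw
    by_cases hbad : DMBad f g w
    · exact ⟨g ⟨w, hw⟩, Or.inr ⟨⟨w, hw⟩, rfl, hbad⟩⟩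
    · have hex : ∃ m : ↥M₀, f m = w := by
        by_contra h
        push_neg at h
        exact hbad (DMBad.base ⟨w, hw⟩ h)
      obtain ⟨m, hfm⟩ := hex
      refine ⟨(m : M), Or.inl ⟨m, by rw [hfm], fun hb => ?_⟩⟩
      obtain ⟨w', hgw', hw'⟩ := hb
      exact hbad (DMBad.step ⟨w, hw⟩ m w' hfm hgw' hw')
end

section
/- Stability of the SLV condition: if mm-spaces X and Y are mm-relative (ε,δ)-close with 0 < ε ≤ ρ/12, and X satisfies SLV(Λ, ρ−2ε, 5ε), then Y satisfies SLV(6e^{2δ}Λ, ρ, ε). -/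
open MeasureTheory Metric Set

/-- Closed `ε`-neighborhood of a set with respect to a distance function `d`. -/
def nbhdC {Z : Type*} (d : Z → Z → ℝ) (ε : ℝ) (A : Set Z) : Set Z :=
  {z | ∃ a ∈ A, d z a ≤ ε}

/-- `d` is a semi-metric on the disjoint union `X ⊕ Y` extending the metrics of `X` and `Y`. -/
def IsSemiMetricExt {X Y : Type*} [MetricSpace X] [MetricSpace Y]
    (d : X ⊕ Y → X ⊕ Y → ℝ) : Prop :=
  (∀ z, d z z = 0) ∧ (∀ z w, 0 ≤ d z w) ∧ (∀ z w, d z w = d w z) ∧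
  (∀ z w v, d z v ≤ d z w + d w v) ∧
  (∀ x x' : X, d (Sum.inl x) (Sum.inl x') = dist x x') ∧
  (∀ y y' : Y, d (Sum.inr y) (Sum.inr y') = dist y y')

/-- The mm-spaces `X` and `Y` are mm-relative `(ε,δ)`-close. -/
def MMClose {X Y : Type*} [MetricSpace X] [MetricSpace Y]
    [MeasurableSpace X] [MeasurableSpace Y]
    (μX : MeasureTheory.Measure X) (μY : MeasureTheory.Measure Y) (ε δ : ℝ) : Prop :=
  ∃ d : X ⊕ Y → X ⊕ Y → ℝ, IsSemiMetricExt d ∧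
    ∀ A : Set (X ⊕ Y), MeasurableSet A →
      μY (Sum.inr ⁻¹' A) ≤ ENNReal.ofReal (Real.exp δ) * μX (Sum.inl ⁻¹' nbhdC d ε A) ∧
      μX (Sum.inl ⁻¹' A) ≤ ENNReal.ofReal (Real.exp δ) * μY (Sum.inr ⁻¹' nbhdC d ε A)

/-- The support of a measure on a metric space. -/
def mSupp {X : Type*} [MetricSpace X] [MeasurableSpace X]
    (μ : MeasureTheory.Measure X) : Set X :=
  {x | ∀ r > 0, 0 < μ (Metric.ball x r)}

/-- The spherical layer volume condition `SLV(Λ, ρ, ε)`. -/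
def SLV {X : Type*} [MetricSpace X] [MeasurableSpace X]
    (μ : MeasureTheory.Measure X) (Λ ρ ε : ℝ) : Prop :=
  ∀ x ∈ mSupp μ,
    μ (Metric.ball x (ρ + ε) \ Metric.ball x ρ)
      ≤ ENNReal.ofReal (Λ * (ε / ρ)) * μ (Metric.ball x ρ)

lemma mSupp_closed {X : Type*} [MetricSpace X] [MeasurableSpace X]
    (μ : Measure X) : IsClosed (mSupp μ) := by
  rw [← isOpen_compl_iff, isOpen_iff]
  intro x hx
  simp only [mSupp, mem_compl_iff, mem_setOf_eq, not_forall] at hx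
  obtain ⟨r, hr, hr0⟩ := hx
  rw [not_lt, le_zero_iff] at hr0
  refine ⟨r / 2, by linarith, fun x' hx' hx'supp => ?_⟩
  have : μ (ball x' (r / 2)) = 0 := by
    refine le_antisymm (le_trans (measure_mono ?_) hr0.le) (zero_le)
    intro z hz
    simp only [mem_ball] at *
    have := dist_triangle z x' x
    linarith
  exact absurd (hx'supp (r / 2) (by linarith)) (by simp [this])

lemma mSupp_compl_null {X : Type*} [MetricSpace X] [CompactSpace X] [MeasurableSpace X]
    (μ : Measure X) : μ (mSupp μ)ᶜ = 0 := by
  apply measure_null_of_locally_null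
  intro x hx
  simp only [mSupp, mem_compl_iff, mem_setOf_eq, not_forall] at hx
  obtain ⟨r, hr, hr0⟩ := hx
  rw [not_lt, le_zero_iff] at hr0
  exact ⟨ball x r, mem_nhdsWithin_of_mem_nhds (ball_mem_nhds x hr), hr0⟩

/-- Stability of the SLV condition under mm-relative `(ε,δ)`-closeness. -/
theorem SLV_stable_under_mm_closeness
    {X Y : Type*} [MetricSpace X] [CompactSpace X] [MeasurableSpace X] [BorelSpace X]
    [MetricSpace Y] [CompactSpace Y] [MeasurableSpace Y] [BorelSpace Y]
    (μX : Measure X) (μY : Measure Y) [IsFiniteMeasure μX] [IsFiniteMeasure μY]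
    (Λ ρ ε δ : ℝ) (hΛ : 0 < Λ) (hδ : 0 ≤ δ) (hε : 0 < ε) (hερ : ε ≤ ρ / 12)
    (hclose : MMClose μX μY ε δ)
    (hX : SLV μX Λ (ρ - 2 * ε) (5 * ε)) :
    SLV μY (6 * Real.exp (2 * δ) * Λ) ρ ε := by
  obtain ⟨d, ⟨hd0, hdnn, hdsym, hdtri, hdX, hdY⟩, htrans⟩ := hclose
  have hρ : 12 * ε ≤ ρ := by linarith
  intro y hy
  -- continuity of x ↦ d (inl x) (inr y)
  have hf : Continuous fun x : X => d (Sum.inl x) (Sum.inr y) := by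
    apply (LipschitzWith.of_dist_le_mul (K := 1) ?_).continuous
    intro a b
    rw [Real.dist_eq, NNReal.coe_one, one_mul, abs_sub_le_iff]
    constructor
    · have h1 := hdtri (Sum.inl a) (Sum.inl b) (Sum.inr y)
      rw [hdX] at h1; linarith
    · have h1 := hdtri (Sum.inl b) (Sum.inl a) (Sum.inr y)
      rw [hdX, dist_comm] at h1; linarith
  -- existence of x0 ∈ mSupp μX with d (inl x0) (inr y) ≤ ε
  set K : ℕ → Set X := fun n => {x | x ∈ mSupp μX ∧ d (Sum.inl x) (Sum.inr y) ≤ ε + 1 / (n + 1)}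
    with hK
  have hKclosed : ∀ n, IsClosed (K n) := fun n =>
    (mSupp_closed μX).inter (isClosed_le hf continuous_const)
  have hKne : ∀ n : ℕ, (K n).Nonempty := by
    intro n
    have hb : (0 : ℝ) < 1 / (n + 1) := by positivity
    have hBmeas : MeasurableSet (Sum.inr '' ball y (1 / (n + 1)) : Set (X ⊕ Y)) :=
      measurableSet_ball.inr_image
    obtain ⟨h1, -⟩ := htrans _ hBmeas
    rw [Set.preimage_image_eq _ Sum.inr_injective] at h1
    have hpos : 0 < μX (Sum.inl ⁻¹' nbhdC d ε (Sum.inr '' ball y (1 / (n + 1)))) := by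
      by_contra h
      rw [not_lt, le_zero_iff] at h
      rw [h, mul_zero, le_zero_iff] at h1
      exact (hy _ hb).ne' h1
    have hns : ¬ (Sum.inl ⁻¹' nbhdC d ε (Sum.inr '' ball y (1 / (n + 1))) ⊆ (mSupp μX)ᶜ) := by
      intro hsub
      exact absurd (le_antisymm (le_trans (measure_mono hsub) (mSupp_compl_null μX).le)
        (zero_le)) hpos.ne'
    obtain ⟨x, hxS, hxsupp⟩ := not_subset.mp hns
    rw [notMem_compl_iff] at hxsupp
    obtain ⟨z, hz, hdz⟩ := hxS
    obtain ⟨a, ha, rfl⟩ := hz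
    refine ⟨x, hxsupp, ?_⟩
    have := hdtri (Sum.inl x) (Sum.inr a) (Sum.inr y)
    rw [hdY] at this
    have hay : dist a y < 1 / (n + 1) := mem_ball.mp ha
    linarith
  have hKmono : ∀ n : ℕ, K (n + 1) ⊆ K n := by
    intro n x hx
    refine ⟨hx.1, hx.2.trans ?_⟩
    have : (1 : ℝ) / (n + 1 + 1) ≤ 1 / (n + 1) := by
      apply one_div_le_one_div_of_le <;> push_cast <;> linarith
    push_cast at this ⊢
    linarith
  obtain ⟨x0, hx0⟩ := IsCompact.nonempty_iInter_of_sequence_nonempty_isCompact_isClosed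
    K hKmono hKne ((hKclosed 0).isCompact) hKclosed
  simp only [mem_iInter] at hx0
  have hx0supp : x0 ∈ mSupp μX := (hx0 0).1
  have hx0d : d (Sum.inl x0) (Sum.inr y) ≤ ε := by
    refine le_of_forall_pos_le_add fun η hη => ?_
    obtain ⟨n, hn⟩ := exists_nat_one_div_lt hη
    exact le_trans (hx0 n).2 (by linarith)
  -- main chain
  have hρ2 : 0 < ρ - 2 * ε := by linarith
  -- step A: μY annulus ≤ e^δ μX annulusX
  have hAmeas : MeasurableSet (Sum.inr '' (ball y (ρ + ε) \ ball y ρ) : Set (X ⊕ Y)) :=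
    (measurableSet_ball.diff measurableSet_ball).inr_image
  obtain ⟨hA1, -⟩ := htrans _ hAmeas
  rw [Set.preimage_image_eq _ Sum.inr_injective] at hA1
  have hsub1 : Sum.inl ⁻¹' nbhdC d ε (Sum.inr '' (ball y (ρ + ε) \ ball y ρ))
      ⊆ ball x0 ((ρ - 2 * ε) + 5 * ε) \ ball x0 (ρ - 2 * ε) := by
    rintro x ⟨z, hz, hdz⟩
    obtain ⟨a, ⟨ha1, ha2⟩, rfl⟩ := hz
    have hay1 : dist a y < ρ + ε := mem_ball.mp ha1
    have hay2 : ρ ≤ dist a y := not_lt.mp (fun h => ha2 (mem_ball.mpr h))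
    constructor
    · rw [mem_ball]
      have t1 := hdtri (Sum.inl x) (Sum.inr a) (Sum.inl x0)
      have t2 := hdtri (Sum.inr a) (Sum.inr y) (Sum.inl x0)
      rw [hdX] at t1
      rw [hdY, hdsym (Sum.inr y) (Sum.inl x0)] at t2
      linarith
    · rw [mem_ball, not_lt]
      have t1 := hdtri (Sum.inr a) (Sum.inl x) (Sum.inr y)
      have t2 := hdtri (Sum.inl x) (Sum.inl x0) (Sum.inr y)
      rw [hdY, hdsym (Sum.inr a) (Sum.inl x)] at t1
      rw [hdX] at t2
      linarith
  -- step B: SLV on X at x0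
  have hB := hX x0 hx0supp
  -- step C: transfer ball back
  have hCmeas : MeasurableSet (Sum.inl '' ball x0 (ρ - 2 * ε) : Set (X ⊕ Y)) :=
    measurableSet_ball.inl_image
  obtain ⟨-, hC⟩ := htrans _ hCmeas
  rw [Set.preimage_image_eq _ Sum.inl_injective] at hC
  have hsub2 : Sum.inr ⁻¹' nbhdC d ε (Sum.inl '' ball x0 (ρ - 2 * ε)) ⊆ ball y ρ := by
    rintro b ⟨z, hz, hdz⟩
    obtain ⟨x, hx, rfl⟩ := hz
    rw [mem_ball] at hx ⊢
    have t1 := hdtri (Sum.inr b) (Sum.inl x) (Sum.inr y)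
    have t2 := hdtri (Sum.inl x) (Sum.inl x0) (Sum.inr y)
    rw [hdY] at t1
    rw [hdX] at t2
    linarith
  -- combine
  set c1 := ENNReal.ofReal (Real.exp δ)
  calc μY (ball y (ρ + ε) \ ball y ρ)
      ≤ c1 * μX (Sum.inl ⁻¹' nbhdC d ε (Sum.inr '' (ball y (ρ + ε) \ ball y ρ))) := hA1
    _ ≤ c1 * μX (ball x0 ((ρ - 2 * ε) + 5 * ε) \ ball x0 (ρ - 2 * ε)) :=
        mul_le_mul_right (measure_mono hsub1) _
    _ ≤ c1 * (ENNReal.ofReal (Λ * (5 * ε / (ρ - 2 * ε))) * μX (ball x0 (ρ - 2 * ε))) :=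
        mul_le_mul_right hB _
    _ ≤ c1 * (ENNReal.ofReal (Λ * (5 * ε / (ρ - 2 * ε))) *
          (c1 * μY (Sum.inr ⁻¹' nbhdC d ε (Sum.inl '' ball x0 (ρ - 2 * ε))))) :=
        mul_le_mul_right (mul_le_mul_right hC _) _
    _ ≤ c1 * (ENNReal.ofReal (Λ * (5 * ε / (ρ - 2 * ε))) * (c1 * μY (ball y ρ))) :=
        mul_le_mul_right (mul_le_mul_right (mul_le_mul_right (measure_mono hsub2) _) _) _
    _ ≤ ENNReal.ofReal (6 * Real.exp (2 * δ) * Λ * (ε / ρ)) * μY (ball y ρ) := by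
        rw [← mul_assoc, ← mul_assoc]
        apply mul_le_mul_left
        rw [← ENNReal.ofReal_mul (Real.exp_pos δ).le,
            ← ENNReal.ofReal_mul (by positivity)]
        apply ENNReal.ofReal_le_ofReal
        have hρ0 : (0 : ℝ) < ρ := by linarith
        have hexp : Real.exp (2 * δ) = Real.exp δ * Real.exp δ := by
          rw [← Real.exp_add]; ring_nf
        have hdiv : 5 * ε / (ρ - 2 * ε) ≤ 6 * (ε / ρ) := by
          rw [show 6 * (ε / ρ) = 6 * ε / ρ by ring, div_le_div_iff₀ hρ2 hρ0]
          nlinarith [mul_pos hε hε]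
        have hE : (0 : ℝ) < Real.exp δ := Real.exp_pos δ
        calc Real.exp δ * (Λ * (5 * ε / (ρ - 2 * ε))) * Real.exp δ
            ≤ Real.exp δ * (Λ * (6 * (ε / ρ))) * Real.exp δ := by
              apply mul_le_mul_of_nonneg_right _ hE.le
              apply mul_le_mul_of_nonneg_left _ hE.le
              exact mul_le_mul_of_nonneg_left hdiv hΛ.le
          _ = 6 * Real.exp (2 * δ) * Λ * (ε / ρ) := by rw [hexp]; ring
end

section
/- Splitting lemma orthogonal part: with X×Y, semi-metric d_{X|X×Y}, and coupling measure γ as above, if u ∈ L²(X×Y,γ) satisfies ∫_{A×Y} u dγ = 0 for every Borel set A ⊂ X, then Δ^ρ_{X_γ} u = ρ⁻² u. -/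
open MeasureTheory Metric Set

/-- Splitting lemma, orthogonal part: if `u ∈ L²(X × Y, γ)` has zero integral over
every cylinder `A × Y`, then the ρ-Laplacian of the split space acts on `u` as
multiplication by `ρ⁻²`. -/
theorem splitting_laplacian_on_orthogonal_complement
    {X Y : Type*} [MetricSpace X] [CompactSpace X] [MeasurableSpace X] [BorelSpace X]
    [MetricSpace Y] [CompactSpace Y] [MeasurableSpace Y] [BorelSpace Y]
    (μX : Measure X) [IsFiniteMeasure μX]
    (γ : Measure (X × Y)) [IsFiniteMeasure γ]
    (hγ : γ.map Prod.fst = μX)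
    (ρ : ℝ) (hρ : 0 < ρ)
    (hpos : ∀ x : X, 0 < γ (Metric.ball x ρ ×ˢ (Set.univ : Set Y)))
    (u : X × Y → ℝ) (hu : Integrable u γ)
    (hzero : ∀ A : Set X, MeasurableSet A →
      ∫ p in A ×ˢ (Set.univ : Set Y), u p ∂γ = 0) :
    ∀ (x : X) (y : Y),
      (ρ ^ 2)⁻¹ * ((γ (Metric.ball x ρ ×ˢ (Set.univ : Set Y))).toReal)⁻¹ *
          ∫ p in Metric.ball x ρ ×ˢ (Set.univ : Set Y), (u (x, y) - u p) ∂γ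
        = (ρ ^ 2)⁻¹ * u (x, y) := by
  intro x y
  set S : Set (X × Y) := Metric.ball x ρ ×ˢ (Set.univ : Set Y) with hS
  have hmS : MeasurableSet S := (measurableSet_ball).prod MeasurableSet.univ
  have hfin : γ S ≠ ⊤ := measure_ne_top γ S
  have htR : 0 < (γ S).toReal := ENNReal.toReal_pos (hpos x).ne' hfin
  have hint : ∫ p in S, (u (x, y) - u p) ∂γ = (γ S).toReal * u (x, y) := by
    rw [integral_sub (integrable_const _) (hu.restrict), integral_const,
      hzero (Metric.ball x ρ) measurableSet_ball]
    simp [Measure.restrict_apply_univ, smul_eq_mul]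
    exact Or.inl rfl
  rw [hint]
  field_simp
end

section
/- Weyl-type lower bound (test function computation): let (X,d,μ) be a compact mm-space with μ of full support, ρ > 0, r ≥ ρ, and {x₁,…,x_N} a 3r-separated set. Define u_i(x) = max{1 − d(x,x_i)/r, 0}. Then the u_i have pairwise disjoint supports at distance at least ρ and for each i, D^ρ(u_i)/‖u_i‖² ≤ 4r⁻² μ^ρ(B_{r+ρ}(x_i))/μ^ρ(B_{r/2}(x_i)), where D^ρ(u) = ∬_{d(x,y)<ρ, with x restricted suitably} |u(x)−u(y)|² dμdμ, ‖u‖² = ρ²∫μ(B_ρ(x))u(x)²dμ(x), and μ^ρ(A) = ρ²∫_A μ(B_ρ(x)) dμ(x). -/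
open MeasureTheory Metric Set

/-- Measurability of `p ↦ μ (ball p ρ)` on a compact Borel metric space. -/
theorem weyl_aux_measurable_ball {X : Type*} [MetricSpace X] [CompactSpace X]
    [MeasurableSpace X] [BorelSpace X] (μ : Measure X) [IsFiniteMeasure μ] (ρ : ℝ) :
    Measurable fun p => μ (Metric.ball p ρ) := by
  have hms : MeasurableSet {z : X × X | dist z.1 z.2 < ρ} :=
    (isOpen_lt (by fun_prop) continuous_const).measurableSet
  have h := measurable_measure_prodMk_left (ν := μ) hms
  have heq : ∀ p : X, Prod.mk p ⁻¹' {z : X × X | dist z.1 z.2 < ρ} = Metric.ball p ρ := by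
    intro p; ext q; simp [Metric.ball, Set.mem_setOf_eq, dist_comm]
  simpa [heq] using h

/-- Weyl-type lower bound, test function computation: the bump functions
`u i = max (1 - dist · (x i) / r) 0` attached to a `3r`-separated family have
supports at mutual distance at least `ρ`, and each has Rayleigh quotient at most
`4 r⁻² μ^ρ(B_{r+ρ}(x i)) / μ^ρ(B_{r/2}(x i))`. -/
theorem weyl_test_functions
    {X : Type*} [MetricSpace X] [CompactSpace X] [MeasurableSpace X] [BorelSpace X]
    (μ : Measure X) [IsFiniteMeasure μ]
    (hfull : ∀ x : X, ∀ r : ℝ, 0 < r → 0 < μ (Metric.ball x r))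
    (ρ r : ℝ) (hρ : 0 < ρ) (hr : ρ ≤ r)
    (N : ℕ) (x : Fin N → X)
    (hsep : ∀ i j, i ≠ j → 3 * r ≤ dist (x i) (x j))
    (u : Fin N → X → ℝ)
    (hu : ∀ i z, u i z = max (1 - dist z (x i) / r) 0) :
    (∀ i j, i ≠ j → ∀ p q, u i p ≠ 0 → u j q ≠ 0 → ρ ≤ dist p q) ∧
    (∀ i,
      ((1/2) * ∫ p, (∫ q in Metric.ball p ρ, (u i p - u i q) ^ 2 ∂μ) ∂μ) /
          (ρ ^ 2 * ∫ p, (μ (Metric.ball p ρ)).toReal * (u i p) ^ 2 ∂μ)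
        ≤ (4 / r ^ 2) *
          ((ρ ^ 2 * ∫ p in Metric.ball (x i) (r + ρ), (μ (Metric.ball p ρ)).toReal ∂μ) /
            (ρ ^ 2 * ∫ p in Metric.ball (x i) (r / 2), (μ (Metric.ball p ρ)).toReal ∂μ))) := by
  have hr0 : 0 < r := lt_of_lt_of_le hρ hr
  -- support property
  have hsupp : ∀ i p, r ≤ dist p (x i) → u i p = 0 := by
    intro i p hp
    rw [hu i p, max_eq_right]
    have : 1 ≤ dist p (x i) / r := (one_le_div hr0).2 hp
    linarith
  have hsupp' : ∀ i p, u i p ≠ 0 → dist p (x i) < r := by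
    intro i p hp
    by_contra h
    exact hp (hsupp i p (le_of_not_gt h))
  constructor
  · intro i j hij p q hp hq
    have h1 := hsupp' i p hp
    have h2 := hsupp' j q hq
    have h3 := hsep i j hij
    have h4 := dist_triangle (x i) p (x j)
    have h5 := dist_triangle p q (x j)
    have := dist_comm (x i) p
    have := dist_comm (x j) q
    linarith [dist_comm (x i) p ▸ h1, dist_comm q (x j) ▸ h2]
  · intro i
    set m : X → ℝ := fun p => (μ (Metric.ball p ρ)).toReal with hm_def
    have hm : Measurable m := (weyl_aux_measurable_ball μ ρ).ennreal_toReal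
    have hm_nonneg : ∀ p, 0 ≤ m p := fun p => ENNReal.toReal_nonneg
    have hm_bdd : ∀ p, m p ≤ (μ Set.univ).toReal := fun p =>
      ENNReal.toReal_mono (measure_ne_top μ _) (measure_mono (Set.subset_univ _))
    have hm_int : Integrable m μ := by
      refine Integrable.mono' (integrable_const ((μ Set.univ).toReal))
        hm.aestronglyMeasurable ?_
      filter_upwards with p
      rw [Real.norm_eq_abs, abs_of_nonneg (hm_nonneg p)]
      exact hm_bdd p
    have hu_cont : Continuous (u i) := by
      have : u i = fun z => max (1 - dist z (x i) / r) 0 := funext (hu i)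
      rw [this]; fun_prop
    have hu_nonneg : ∀ p, 0 ≤ u i p := by intro p; rw [hu i p]; exact le_max_right _ _
    have hu_le_one : ∀ p, u i p ≤ 1 := by
      intro p; rw [hu i p]
      apply max_le _ zero_le_one
      have : 0 ≤ dist p (x i) / r := div_nonneg dist_nonneg hr0.le
      linarith
    -- Lipschitz-type bound
    have hlip : ∀ p q, |u i p - u i q| ≤ dist p q / r := by
      intro p q
      rw [hu i p, hu i q]
      refine le_trans (abs_max_sub_max_le_abs _ _ _) ?_
      have : (1 - dist p (x i) / r) - (1 - dist q (x i) / r)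
          = (dist q (x i) - dist p (x i)) / r := by ring
      rw [this, abs_div, abs_of_nonneg hr0.le]
      apply div_le_div_of_nonneg_right _ hr0.le
      calc |dist q (x i) - dist p (x i)| ≤ dist q p := abs_dist_sub_le _ _ _
        _ = dist p q := dist_comm _ _
    set A : ℝ := ∫ p in Metric.ball (x i) (r + ρ), m p ∂μ with hA_def
    set B : ℝ := ∫ p in Metric.ball (x i) (r / 2), m p ∂μ with hB_def
    have hA0 : 0 ≤ A :=
      setIntegral_nonneg measurableSet_ball (fun p _ => hm_nonneg p)
    have hB0 : 0 < B := by
      rw [hB_def, setIntegral_pos_iff_support_of_nonneg_ae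
        (Filter.Eventually.of_forall fun p => hm_nonneg p) (hm_int.integrableOn)]
      have hsub : Metric.ball (x i) (r / 2) ⊆ Function.support m ∩ Metric.ball (x i) (r / 2) := by
        intro p hp
        refine ⟨?_, hp⟩
        have : 0 < μ (Metric.ball p ρ) := hfull p ρ hρ
        simp only [Function.mem_support, hm_def]
        exact ne_of_gt (ENNReal.toReal_pos this.ne' (measure_ne_top μ _))
      calc (0 : ENNReal) < μ (Metric.ball (x i) (r / 2)) := hfull _ _ (by linarith)
        _ ≤ _ := measure_mono hsub
    -- numerator bound
    set f : X → ℝ := fun p => ∫ q in Metric.ball p ρ, (u i p - u i q) ^ 2 ∂μ with hf_def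
    set g : X → ℝ := (Metric.ball (x i) (r + ρ)).indicator (fun p => (ρ / r) ^ 2 * m p)
      with hg_def
    have hg_int : Integrable g μ := (hm_int.const_mul _).indicator measurableSet_ball
    have hfg : ∀ p, f p ≤ g p := by
      intro p
      by_cases hp : p ∈ Metric.ball (x i) (r + ρ)
      · rw [hg_def, Set.indicator_of_mem hp]
        calc f p ≤ ‖f p‖ := le_abs_self _
          _ ≤ (ρ / r) ^ 2 * (μ (Metric.ball p ρ)).toReal := by
            refine norm_setIntegral_le_of_norm_le_const (measure_lt_top μ _) ?_
            · intro q hq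
              rw [Real.norm_eq_abs, abs_of_nonneg (sq_nonneg _)]
              have h1 : |u i p - u i q| ≤ ρ / r := by
                refine le_trans (hlip p q) ?_
                apply div_le_div_of_nonneg_right _ hr0.le
                exact le_of_lt (by simpa [dist_comm] using hq)
              calc (u i p - u i q) ^ 2 = |u i p - u i q| ^ 2 := (sq_abs _).symm
                _ ≤ (ρ / r) ^ 2 := by
                  apply pow_le_pow_left₀ (abs_nonneg _) h1
          _ = (ρ / r) ^ 2 * m p := rfl
      · have hp' : r + ρ ≤ dist p (x i) := by
          simpa [Metric.mem_ball, not_lt] using hp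
        have hz : ∀ q ∈ Metric.ball p ρ, (u i p - u i q) ^ 2 = 0 := by
          intro q hq
          have h1 : u i p = 0 := hsupp i p (by linarith)
          have h2 : u i q = 0 := by
            apply hsupp i q
            have hd : dist q p < ρ := by simpa [dist_comm] using hq
            have := dist_triangle p q (x i)
            have := dist_comm q p
            linarith [dist_triangle p q (x i), dist_comm p q ▸ hd]
          rw [h1, h2]; ring
        have : f p = 0 := by
          show (∫ q in Metric.ball p ρ, (u i p - u i q) ^ 2 ∂μ) = 0
          rw [setIntegral_congr_fun measurableSet_ball fun q hq => hz q hq]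
          simp
        rw [this, hg_def, Set.indicator_of_notMem hp]
    have hf_nonneg : ∀ p, 0 ≤ f p := fun p =>
      setIntegral_nonneg measurableSet_ball (fun q _ => sq_nonneg _)
    have hNum : (∫ p, f p ∂μ) ≤ (ρ / r) ^ 2 * A := by
      have h1 : (∫ p, f p ∂μ) ≤ ∫ p, g p ∂μ :=
        integral_mono_of_nonneg (Filter.Eventually.of_forall hf_nonneg) hg_int
          (Filter.Eventually.of_forall hfg)
      have h2 : (∫ p, g p ∂μ) = (ρ / r) ^ 2 * A := by
        rw [hg_def, integral_indicator measurableSet_ball, hA_def, integral_const_mul]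
      linarith
    -- denominator bound
    set h : X → ℝ := fun p => m p * (u i p) ^ 2 with hh_def
    have hh_int : Integrable h μ := by
      refine Integrable.mono' (integrable_const ((μ Set.univ).toReal))
        ((hm.mul ((hu_cont.pow 2).measurable)).aestronglyMeasurable) ?_
      filter_upwards with p
      rw [Real.norm_eq_abs, abs_of_nonneg (mul_nonneg (hm_nonneg p) (sq_nonneg _))]
      calc m p * (u i p) ^ 2 ≤ m p * 1 := by
            apply mul_le_mul_of_nonneg_left _ (hm_nonneg p)
            calc (u i p) ^ 2 = |u i p| ^ 2 := (sq_abs _).symm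
              _ ≤ 1 ^ 2 := by
                apply pow_le_pow_left₀ (abs_nonneg _)
                rw [abs_of_nonneg (hu_nonneg p)]; exact hu_le_one p
              _ = 1 := one_pow 2
        _ = m p := mul_one _
        _ ≤ (μ Set.univ).toReal := hm_bdd p
    have hDen : (1/4 : ℝ) * B ≤ ∫ p, h p ∂μ := by
      set gd : X → ℝ := (Metric.ball (x i) (r / 2)).indicator (fun p => (1/4 : ℝ) * m p)
        with hgd_def
      have h1 : (∫ p, gd p ∂μ) = (1/4 : ℝ) * B := by
        rw [hgd_def, integral_indicator measurableSet_ball, hB_def, integral_const_mul]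
      have h2 : ∀ p, gd p ≤ h p := by
        intro p
        by_cases hp : p ∈ Metric.ball (x i) (r / 2)
        · rw [hgd_def, Set.indicator_of_mem hp, hh_def]
          have hub : (1/2 : ℝ) ≤ u i p := by
            rw [hu i p]
            refine le_max_of_le_left ?_
            have hd : dist p (x i) < r / 2 := by simpa [Metric.mem_ball] using hp
            have : dist p (x i) / r < 1 / 2 := by
              rw [div_lt_div_iff₀ hr0 (by norm_num : (0:ℝ) < 2)]
              linarith
            linarith
          have : (1/4 : ℝ) ≤ (u i p) ^ 2 := by nlinarith
          calc (1/4 : ℝ) * m p ≤ (u i p) ^ 2 * m p :=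
                mul_le_mul_of_nonneg_right this (hm_nonneg p)
            _ = m p * (u i p) ^ 2 := mul_comm _ _
        · rw [hgd_def, Set.indicator_of_notMem hp]
          exact mul_nonneg (hm_nonneg p) (sq_nonneg _)
      have h3 : (∫ p, gd p ∂μ) ≤ ∫ p, h p ∂μ :=
        integral_mono_of_nonneg
          (Filter.Eventually.of_forall fun p => by
            rw [hgd_def]
            exact Set.indicator_nonneg (fun q _ => by positivity) p)
          hh_int (Filter.Eventually.of_forall h2)
      linarith
    -- combine
    have hDenPos : (0 : ℝ) < ρ ^ 2 * ((1/4 : ℝ) * B) := by positivity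
    have key : ((1/2) * ∫ p, f p ∂μ) / (ρ ^ 2 * ∫ p, h p ∂μ)
        ≤ ((1/2) * ((ρ / r) ^ 2 * A)) / (ρ ^ 2 * ((1/4 : ℝ) * B)) := by
      apply div_le_div₀ (by positivity) (by linarith) hDenPos
      have := mul_le_mul_of_nonneg_left hDen (sq_nonneg ρ)
      linarith
    refine le_trans key ?_
    have hfinal : ((1/2) * ((ρ / r) ^ 2 * A)) / (ρ ^ 2 * ((1/4 : ℝ) * B))
        = 2 * A / (r ^ 2 * B) := by
      rw [div_pow]
      field_simp
      ring
    rw [hfinal]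
    have hrhs : (4 / r ^ 2) * ((ρ ^ 2 * A) / (ρ ^ 2 * B)) = 4 * A / (r ^ 2 * B) := by
      rw [mul_div_mul_left _ _ (by positivity : (ρ:ℝ) ^ 2 ≠ 0)]
      field_simp
    rw [hrhs]
    apply div_le_div_of_nonneg_right ?_ (by positivity)
    · linarith
end
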